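/- Let 0 < q < 1, 0 < μ < 1, −1 < ν ≤ 0. Then for all nonnegative integers ℓ, g, L, the q-Hahn PushTASEP update probability P_{ℓ,g}(L) = ∑_{p=0}^{min{ℓ,L}} φ_{q^{−1},q^g,μνq^{g−1}}(p|ℓ) ψ_{q,νμ^{−1}q^p,νq^g,ν²q^{g+p}}(L−p) is nonnegative, since each factor φ_{q^{−1},q^g,μνq^{g−1}}(p|ℓ) ≥ 0 and each factor ψ_{q,νμ^{−1}q^p,νq^g,ν²q^{g+p}}(L−p) ≥ 0 termwise. -/
import Mathlib


open Filter Topology MeasureTheory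

/-- Finite q-Pochhammer symbol `(a;q)_n`. -/
noncomputable def qPoch (a q : ℝ) (n : ℕ) : ℝ := ∏ i ∈ Finset.range n, (1 - a * q ^ i)

/-- Infinite q-Pochhammer symbol `(a;q)_∞`. -/
noncomputable def qPochInf (a q : ℝ) : ℝ := ∏' i : ℕ, (1 - a * q ^ i)

/-- The q-beta-binomial weight `φ_{q,μ,ν}(s|y)`. -/
noncomputable def phiW (q μ ν : ℝ) (s y : ℕ) : ℝ :=
  μ ^ s * (qPoch (ν / μ) q s * qPoch μ q (y - s) / qPoch ν q y) *
    (qPoch q q y / (qPoch q q s * qPoch q q (y - s)))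

/-- The weight `φ_{q,μ,ν}(s|∞)`. -/
noncomputable def phiInfW (q μ ν : ℝ) (s : ℕ) : ℝ :=
  μ ^ s * (qPoch (ν / μ) q s / qPoch q q s) * (qPochInf μ q / qPochInf ν q)

/-- The q-hypergeometric weight `ψ_{q,a,b,c}(p)`. -/
noncomputable def psiW (q a b c : ℝ) (p : ℕ) : ℝ :=
  (c / (a * b)) ^ p * (qPoch a q p * qPoch b q p / (qPoch q q p * qPoch c q p)) *
    (qPochInf c q * qPochInf (c / (a * b)) q / (qPochInf (c / a) q * qPochInf (c / b) q))

/-- The q-Hahn PushTASEP update probability `P_{ℓ,g}(L)`. -/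
noncomputable def Phahn (q μ ν : ℝ) (ℓ g L : ℕ) : ℝ :=
  ∑ p ∈ Finset.range (min ℓ L + 1),
    phiW q⁻¹ (q ^ g) (μ * ν * q ^ ((g : ℤ) - 1)) p ℓ *
      psiW q (ν * μ⁻¹ * q ^ p) (ν * q ^ g) (ν ^ 2 * q ^ (g + p)) (L - p)

lemma my_tprod_nonneg {f : ℕ → ℝ} (h : ∀ i, 0 ≤ f i) : 0 ≤ ∏' i, f i := by
  by_cases hf : Multipliable f
  · exact ge_of_tendsto' hf.hasProd (fun s => Finset.prod_nonneg fun i _ => h i)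
  · rw [tprod_eq_one_of_not_multipliable hf]; exact zero_le_one

lemma qPochInf_nonneg {a q : ℝ} (h : ∀ i : ℕ, 0 ≤ 1 - a * q ^ i) : 0 ≤ qPochInf a q :=
  my_tprod_nonneg h

lemma qPoch_nonneg {a q : ℝ} {n : ℕ} (h : ∀ i, i < n → 0 ≤ 1 - a * q ^ i) :
    0 ≤ qPoch a q n :=
  Finset.prod_nonneg fun i hi => h i (Finset.mem_range.mp hi)

/-- Factor nonnegativity when `a ≤ 0`, `0 ≤ q`. -/
lemma factor_nonneg_of_nonpos {a q : ℝ} (ha : a ≤ 0) (hq : 0 ≤ q) (i : ℕ) :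
    0 ≤ 1 - a * q ^ i := by
  have := mul_nonpos_of_nonpos_of_nonneg ha (pow_nonneg hq i)
  linarith

/-- Factor nonnegativity when `0 ≤ a ≤ 1`, `0 ≤ q ≤ 1`. -/
lemma factor_nonneg_of_le_one {a q : ℝ} (ha0 : 0 ≤ a) (ha1 : a ≤ 1) (hq0 : 0 ≤ q)
    (hq1 : q ≤ 1) (i : ℕ) : 0 ≤ 1 - a * q ^ i := by
  have := mul_le_one₀ ha1 (pow_nonneg hq0 i) (pow_le_one₀ hq0 hq1)
  linarith

/-- The q-factorial with base `q⁻¹` alternates signs. -/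
lemma qPoch_inv_eq (q : ℝ) (n : ℕ) :
    qPoch q⁻¹ q⁻¹ n = (-1) ^ n * ∏ i ∈ Finset.range n, (q⁻¹ * q⁻¹ ^ i - 1) := by
  unfold qPoch
  induction n with
  | zero => simp
  | succ k ih => rw [Finset.prod_range_succ, Finset.prod_range_succ, ih]; ring

lemma qfac_ratio_nonneg {q : ℝ} (hq0 : 0 < q) (hq1 : q < 1) {s y : ℕ} (hsy : s ≤ y) :
    0 ≤ qPoch q⁻¹ q⁻¹ y / (qPoch q⁻¹ q⁻¹ s * qPoch q⁻¹ q⁻¹ (y - s)) := by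
  have hqi : (1:ℝ) < q⁻¹ := by
    nlinarith [mul_inv_cancel₀ (ne_of_gt hq0), inv_pos.mpr hq0]
  have hpos : ∀ n : ℕ, (0:ℝ) < ∏ i ∈ Finset.range n, (q⁻¹ * q⁻¹ ^ i - 1) := by
    intro n
    apply Finset.prod_pos
    intro i _
    have h1 : (1:ℝ) < q⁻¹ ^ (i + 1) := one_lt_pow₀ hqi i.succ_ne_zero
    rw [pow_succ] at h1
    nlinarith
  rw [qPoch_inv_eq q y, qPoch_inv_eq q s, qPoch_inv_eq q (y - s)]
  have hsign : ((-1:ℝ)) ^ s * (-1:ℝ) ^ (y - s) = (-1:ℝ) ^ y := by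
    rw [← pow_add, Nat.add_sub_cancel' hsy]
  have hne : ((-1:ℝ)) ^ y ≠ 0 := pow_ne_zero _ (by norm_num)
  have heq : ((-1:ℝ) ^ s * (∏ i ∈ Finset.range s, (q⁻¹ * q⁻¹ ^ i - 1))) *
      ((-1:ℝ) ^ (y - s) * (∏ i ∈ Finset.range (y - s), (q⁻¹ * q⁻¹ ^ i - 1))) =
      (-1:ℝ) ^ y * ((∏ i ∈ Finset.range s, (q⁻¹ * q⁻¹ ^ i - 1)) *
        (∏ i ∈ Finset.range (y - s), (q⁻¹ * q⁻¹ ^ i - 1))) := by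
    rw [mul_mul_mul_comm, hsign]
  rw [heq, mul_div_mul_left _ _ hne]
  exact le_of_lt (div_pos (hpos y) (mul_pos (hpos s) (hpos (y - s))))

lemma phi_nonneg {q mu nu : ℝ} (hq0 : 0 < q) (hq1 : q < 1) (hmu0 : 0 < mu)
    (hnu1 : nu ≤ 0) (g : ℕ) {p l : ℕ} (hpl : p ≤ l) :
    0 ≤ phiW q⁻¹ (q ^ g) (mu * nu * q ^ ((g : ℤ) - 1)) p l := by
  have hqi0 : (0:ℝ) < q⁻¹ := inv_pos.mpr hq0
  have hnu' : mu * nu * q ^ ((g : ℤ) - 1) ≤ 0 :=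
    mul_nonpos_of_nonpos_of_nonneg
      (mul_nonpos_of_nonneg_of_nonpos hmu0.le hnu1) (zpow_nonneg hq0.le _)
  unfold phiW
  apply mul_nonneg
  apply mul_nonneg
  · exact pow_nonneg (pow_nonneg hq0.le g) p
  · apply div_nonneg
    apply mul_nonneg
    · exact qPoch_nonneg fun i _ =>
        factor_nonneg_of_nonpos
          (div_nonpos_of_nonpos_of_nonneg hnu' (pow_nonneg hq0.le g)) hqi0.le i
    · -- qPoch (q ^ g) q⁻¹ (l - p)
      rcases le_or_gt (l - p) g with h | h
      · apply qPoch_nonneg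
        intro i hi
        have hig : i ≤ g := le_trans (Nat.le_of_lt_succ (Nat.lt_succ_of_lt hi)) h
        have h1 : q ^ g ≤ q ^ i := pow_le_pow_of_le_one hq0.le hq1.le hig
        have h2 : q ^ g * q⁻¹ ^ i ≤ q ^ i * q⁻¹ ^ i :=
          mul_le_mul_of_nonneg_right h1 (pow_nonneg hqi0.le i)
        have h3 : q ^ i * q⁻¹ ^ i = 1 := by
          rw [← mul_pow, mul_inv_cancel₀ (ne_of_gt hq0), one_pow]
        linarith
      · unfold qPoch
        refine le_of_eq (Eq.symm ?_)
        refine Finset.prod_eq_zero (Finset.mem_range.mpr h) ?_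
        rw [← mul_pow, mul_inv_cancel₀ (ne_of_gt hq0), one_pow]
        ring
    · exact qPoch_nonneg fun i _ => factor_nonneg_of_nonpos hnu' hqi0.le i
  · exact qfac_ratio_nonneg hq0 hq1 hpl

lemma psi_nonneg {q mu nu : ℝ} (hq0 : 0 < q) (hq1 : q < 1) (hmu0 : 0 < mu) (hmu1 : mu < 1)
    (hnu0 : -1 < nu) (hnu1 : nu ≤ 0) (g p m : ℕ) :
    0 ≤ psiW q (nu * mu⁻¹ * q ^ p) (nu * q ^ g) (nu ^ 2 * q ^ (g + p)) m := by
  set a := nu * mu⁻¹ * q ^ p with ha_def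
  set b := nu * q ^ g with hb_def
  set c := nu ^ 2 * q ^ (g + p) with hc_def
  have ha : a ≤ 0 :=
    mul_nonpos_of_nonpos_of_nonneg
      (mul_nonpos_of_nonpos_of_nonneg hnu1 (inv_nonneg.mpr hmu0.le)) (pow_nonneg hq0.le p)
  have hb : b ≤ 0 := mul_nonpos_of_nonpos_of_nonneg hnu1 (pow_nonneg hq0.le g)
  have hc0 : 0 ≤ c := mul_nonneg (sq_nonneg nu) (pow_nonneg hq0.le _)
  have hc1 : c ≤ 1 := by
    have h1 : nu ^ 2 ≤ 1 := by nlinarith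
    have := mul_le_one₀ h1 (pow_nonneg hq0.le (g + p)) (pow_le_one₀ hq0.le hq1.le)
    linarith
  have hab : 0 ≤ a * b := mul_nonneg_of_nonpos_of_nonpos ha hb
  have hcab0 : 0 ≤ c / (a * b) := div_nonneg hc0 hab
  have hcab1 : c / (a * b) ≤ 1 := by
    rcases eq_or_lt_of_le hnu1 with h | h
    · simp [hc_def, h]
    · have hnu_ne : nu ≠ 0 := ne_of_lt h
      have hcpos : 0 < c :=
        mul_pos (pow_two_pos_of_ne_zero hnu_ne) (pow_pos hq0 _)
      have hab_eq : a * b = c * mu⁻¹ := by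
        rw [ha_def, hb_def, hc_def, pow_add]; ring
      rw [hab_eq]
      have hkey : c / (c * mu⁻¹) = mu := by
        field_simp
      rw [hkey]
      exact hmu1.le
  unfold psiW
  apply mul_nonneg (mul_nonneg (pow_nonneg hcab0 m) ?_) ?_
  · exact div_nonneg
      (mul_nonneg (qPoch_nonneg fun i _ => factor_nonneg_of_nonpos ha hq0.le i)
        (qPoch_nonneg fun i _ => factor_nonneg_of_nonpos hb hq0.le i))
      (mul_nonneg
        (qPoch_nonneg fun i _ => factor_nonneg_of_le_one hq0.le hq1.le hq0.le hq1.le i)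
        (qPoch_nonneg fun i _ => factor_nonneg_of_le_one hc0 hc1 hq0.le hq1.le i))
  · exact div_nonneg
      (mul_nonneg (qPochInf_nonneg (factor_nonneg_of_le_one hc0 hc1 hq0.le hq1.le))
        (qPochInf_nonneg (factor_nonneg_of_le_one hcab0 hcab1 hq0.le hq1.le)))
      (mul_nonneg
        (qPochInf_nonneg
          (factor_nonneg_of_nonpos (div_nonpos_of_nonneg_of_nonpos hc0 ha) hq0.le))
        (qPochInf_nonneg
          (factor_nonneg_of_nonpos (div_nonpos_of_nonneg_of_nonpos hc0 hb) hq0.le)))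

/-- Nonnegativity of the q-Hahn PushTASEP update probabilities in the case nu ≤ 0:
each factor is termwise nonnegative, hence so is P_{l,g}(L). -/
theorem stmt_18 (q mu nu : ℝ) (hq0 : 0 < q) (hq1 : q < 1) (hmu0 : 0 < mu) (hmu1 : mu < 1)
    (hnu0 : -1 < nu) (hnu1 : nu ≤ 0) (l g L : ℕ) :
    (∀ p ≤ min l L,
        0 ≤ phiW q⁻¹ (q ^ g) (mu * nu * q ^ ((g : ℤ) - 1)) p l
        ∧ 0 ≤ psiW q (nu * mu⁻¹ * q ^ p) (nu * q ^ g) (nu ^ 2 * q ^ (g + p)) (L - p))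
    ∧ 0 ≤ Phahn q mu nu l g L := by
  constructor
  · intro p hp
    exact ⟨phi_nonneg hq0 hq1 hmu0 hnu1 g (le_trans hp (min_le_left l L)),
      psi_nonneg hq0 hq1 hmu0 hmu1 hnu0 hnu1 g p (L - p)⟩
  · unfold Phahn
    apply Finset.sum_nonneg
    intro p hp
    have hp' : p ≤ min l L := Nat.le_of_lt_succ (Finset.mem_range.mp hp)
    exact mul_nonneg (phi_nonneg hq0 hq1 hmu0 hnu1 g (le_trans hp' (min_le_left l L)))
      (psi_nonneg hq0 hq1 hmu0 hmu1 hnu0 hnu1 g p (L - p))
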